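/- Robustness does not imply resilience for planning systems: there exist a planning system (state set S, action set Act, partial deterministic transition function step), a set of missions T, and a set of hazards H such that the system is robust with respect to H but not resilient with respect to H. -/
import Mathlib


/-- Execution of a sequence of actions from a state, for a partial deterministic
transition function `step : S → A → Option S`. -/
def run {S A : Type*} (step : S → A → Option S) : S → List A → Option S
  | s, [] => some s
  | s, a :: P => (step s a).bind fun t => run step t P

/-- `P` is a plan for the mission `(c, g)`. -/
def IsPlan {S A : Type*} (step : S → A → Option S) (P : List A) (c g : S) : Prop :=
  run step c P = some g

/-- `s` is a state on the path of `P` started from `c` (a visited state). -/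
def OnPath {S A : Type*} (step : S → A → Option S) (P : List A) (c s : S) : Prop :=
  ∃ P₁ P₂ : List A, P = P₁ ++ P₂ ∧ run step c P₁ = some s

/-- A plan `P` for `(c, g)` is fragile w.r.t. hazards `H`. -/
def PlanFragile {S A : Type*} (step : S → A → Option S) (H : S → S → Prop)
    (P : List A) (c g : S) : Prop :=
  ∃ s t : S, OnPath step P c s ∧ H s t ∧ ¬ ∃ P' : List A, IsPlan step P' t g

/-- A plan `P` for `(c, g)` is robust w.r.t. hazards `H`: no visited state is a hazard source. -/
def PlanRobust {S A : Type*} (step : S → A → Option S) (H : S → S → Prop)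
    (P : List A) (c : S) : Prop :=
  ∀ s : S, OnPath step P c s → ∀ t : S, ¬ H s t

/-- A plan `P` for `(c, g)` is resilient w.r.t. hazards `H`. -/
def PlanResilient {S A : Type*} (step : S → A → Option S) (H : S → S → Prop)
    (P : List A) (c g : S) : Prop :=
  ∀ s t : S, H s t → OnPath step P c s → ∃ P' : List A, IsPlan step P' t g

/-- The system is fragile w.r.t. `H` over missions `T`. -/
def SysFragile {S A : Type*} (step : S → A → Option S) (T H : S → S → Prop) : Prop :=
  ∃ c g : S, T c g ∧ ∀ P : List A, IsPlan step P c g → PlanFragile step H P c g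

/-- The system is robust w.r.t. `H` over missions `T`. -/
def SysRobust {S A : Type*} (step : S → A → Option S) (T H : S → S → Prop) : Prop :=
  ∀ c g : S, T c g → ∃ P : List A, IsPlan step P c g ∧ PlanRobust step H P c

/-- The system is resilient w.r.t. `H` over missions `T`. -/
def SysResilient {S A : Type*} (step : S → A → Option S) (T H : S → S → Prop) : Prop :=
  ∀ c g : S, T c g → ∀ P : List A, IsPlan step P c g → PlanResilient step H P c g

def exStep : ℕ → Bool → Option ℕ := fun s a =>
  if s = 0 then (if a then some 2 else some 1)
  else if s = 1 then some 2 else none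

/-- Robustness does not imply resilience for planning systems. -/
theorem robust_not_imp_resilient :
    ∃ (S A : Type) (step : S → A → Option S) (T H : S → S → Prop),
      SysRobust step T H ∧ ¬ SysResilient step T H := by
  refine ⟨ℕ, Bool, exStep, fun c g => c = 0 ∧ g = 2, fun s t => s = 1 ∧ t = 3, ?_, ?_⟩
  · rintro c g ⟨rfl, rfl⟩
    refine ⟨[true], by simp [IsPlan, run, exStep], ?_⟩
    rintro s ⟨P₁, P₂, hP, hr⟩ t ⟨rfl, rfl⟩
    match P₁, hP with
    | [], _ => simp [run] at hr
    | [a], h =>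
      have : a = true := by
        have := congrArg (·.head?) h; simpa using this
      subst this
      simp [run, exStep] at hr
  · intro hres
    have h1 : IsPlan exStep [false, true] 0 2 := by simp [IsPlan, run, exStep]
    have h2 := hres 0 2 ⟨rfl, rfl⟩ [false, true] h1 1 3 ⟨rfl, rfl⟩
      ⟨[false], [true], rfl, by simp [run, exStep]⟩
    obtain ⟨P', hP'⟩ := h2
    match P' with
    | [] => simp [IsPlan, run] at hP'
    | a :: l => simp [IsPlan, run, exStep] at hP'
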